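/- For every s ∈ [0,1], ∫₀¹ g(s,t)² m(t) dt = (1/20) · m(s)² · (1 + 2m(s)). Equivalently, 30·∫₀¹ g(s,t)² m(t) dt = (3/2) m(s)² (1 + 2m(s)), which is the function h_ols(s) appearing in the limit covariance kernel for the ordinary least squares version of the test. -/
import Mathlib

/-- `m(s) = s(1-s)`. -/
noncomputable def m (s : ℝ) : ℝ := s * (1 - s)

/-- `g(s,t) = min(s,t)·(1 - max(s,t))`. -/
noncomputable def g (s t : ℝ) : ℝ := min s t * (1 - max s t)

/-- For every `s ∈ [0,1]`,
`∫₀¹ g(s,t)² m(t) dt = (1/20) m(s)² (1 + 2 m(s))`. -/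
theorem stmt2 (s : ℝ) (hs : s ∈ Set.Icc (0 : ℝ) 1) :
    ∫ t in (0 : ℝ)..1, (g s t) ^ 2 * m t = (1 / 20) * (m s) ^ 2 * (1 + 2 * m s) := by
  obtain ⟨hs0, hs1⟩ := hs
  have hcont : Continuous (fun t : ℝ => (g s t) ^ 2 * m t) := by
    unfold g m; fun_prop
  have hsplit : (∫ t in (0:ℝ)..s, (g s t) ^ 2 * m t) + (∫ t in s..1, (g s t) ^ 2 * m t)
      = ∫ t in (0:ℝ)..1, (g s t) ^ 2 * m t :=
    intervalIntegral.integral_add_adjacent_intervals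
      (hcont.intervalIntegrable 0 s) (hcont.intervalIntegrable s 1)
  have h1 : (∫ t in (0:ℝ)..s, (g s t) ^ 2 * m t)
      = ∫ t in (0:ℝ)..s, ((1-s)^2 * t^3 - (1-s)^2 * t^4) := by
    apply intervalIntegral.integral_congr
    intro t ht
    rw [Set.uIcc_of_le hs0] at ht
    simp only [g, m, min_eq_right ht.2, max_eq_left ht.2]
    ring
  have h2 : (∫ t in s..1, (g s t) ^ 2 * m t)
      = ∫ t in s..1, (s^2 * (t - 3*t^2 + 3*t^3 - t^4)) := by
    apply intervalIntegral.integral_congr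
    intro t ht
    rw [Set.uIcc_of_le hs1] at ht
    simp only [g, m, min_eq_left ht.1, max_eq_right ht.1]
    ring
  have e1 : (∫ t in (0:ℝ)..s, ((1-s)^2 * t^3 - (1-s)^2 * t^4))
      = (1-s)^2 * (s^4/4) - (1-s)^2 * (s^5/5) := by
    rw [intervalIntegral.integral_sub ((by fun_prop : Continuous fun t:ℝ => (1-s)^2*t^3).intervalIntegrable _ _)
      ((by fun_prop : Continuous fun t:ℝ => (1-s)^2*t^4).intervalIntegrable _ _),
      intervalIntegral.integral_const_mul, intervalIntegral.integral_const_mul,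
      integral_pow, integral_pow]
    norm_num
  have e2 : (∫ t in s..1, (s^2 * (t - 3*t^2 + 3*t^3 - t^4)))
      = s^2 * ((1/2 - s^2/2) - 3*(1/3 - s^3/3) + 3*(1/4 - s^4/4) - (1/5 - s^5/5)) := by
    rw [intervalIntegral.integral_const_mul]
    congr 1
    have : ∀ t:ℝ, t - 3*t^2 + 3*t^3 - t^4 = t^1 - 3*t^2 + (3*t^3 - t^4) := by intro t; ring
    simp_rw [this]
    rw [intervalIntegral.integral_add, intervalIntegral.integral_sub, intervalIntegral.integral_sub]
    · rw [intervalIntegral.integral_const_mul, intervalIntegral.integral_const_mul,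
        integral_pow, integral_pow, integral_pow, integral_pow]
      norm_num
      ring
    all_goals apply Continuous.intervalIntegrable; fun_prop
  rw [← hsplit, h1, h2, e1, e2, m]
  ring
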